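/- Let S be a Sauer Matrix of size 4 in which at least three rows contain an entry equal to 1 (i.e., S is of type (3,1) or (4,0)). Then S is infeasible for translations: there is no r ∈ [0,1)^4 such that r+S is totally 1-submodular. -/

import Mathlib

open Matrix

/-- Every `k×k` minor of `A` is at most `c` in absolute value. -/
def MinorsLE {m n : ℕ} (k : ℕ) (A : Matrix (Fin m) (Fin n) ℝ) (c : ℝ) : Prop :=
  ∀ (f : Fin k ↪ Fin m) (g : Fin k ↪ Fin n), |(A.submatrix f g).det| ≤ c

/-- `A` is totally 1-submodular: all its minors, of any size, are at most `1`
in absolute value. -/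
def Totally1Submodular {m n : ℕ} (A : Matrix (Fin m) (Fin n) ℝ) : Prop :=
  ∀ k : ℕ, MinorsLE k A 1

/-- The shifted matrix `t + A`, whose columns are `t + A_j`. -/
def shiftMat {m n : ℕ} (t : Fin m → ℝ) (A : Matrix (Fin m) (Fin n) ℝ) :
    Matrix (Fin m) (Fin n) ℝ :=
  Matrix.of fun i j => t i + A i j

/-- All entries of `A` lie in `{-1, 0, 1}`. -/
def SignEntries {m n : ℕ} (A : Matrix (Fin m) (Fin n) ℝ) : Prop :=
  ∀ i j, A i j = -1 ∨ A i j = 0 ∨ A i j = 1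

/-- The data admissible for the shifted Heller constant `h_s(m)`: a translation vector
`t ∈ [0,1)^m \ {0}` and a matrix `A ∈ {-1,0,1}^{m×n}` with pairwise distinct columns
such that `t + A` is totally 1-submodular. -/
def ShiftedAdmissible (m n : ℕ) (t : Fin m → ℝ) (A : Matrix (Fin m) (Fin n) ℝ) : Prop :=
  (∀ i, 0 ≤ t i ∧ t i < 1) ∧ t ≠ 0 ∧ SignEntries A ∧
    Function.Injective A.transpose ∧ Totally1Submodular (shiftMat t A)

/-- A Sauer Matrix of size `k`: a `{-1,0,1}`-matrix of format `k × 2^k` having, for each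
subset `E ⊆ {1,…,k}`, exactly one column whose support equals `E`. -/
def IsSauer {k : ℕ} (S : Matrix (Fin k) (Fin (2 ^ k)) ℝ) : Prop :=
  SignEntries S ∧ ∀ E : Set (Fin k), ∃! j : Fin (2 ^ k), ∀ i, S i j ≠ 0 ↔ i ∈ E

/-- Embedding of `Fin 2` given two distinct points. -/
def emb2 {α : Type*} (a b : α) (h : a ≠ b) : Fin 2 ↪ α :=
  ⟨![a, b], by
    intro x y hxy
    fin_cases x <;> fin_cases y <;> simp_all⟩

/-- Embedding of `Fin 3` given three distinct points. -/
def emb3 {α : Type*} (a b c : α) (hab : a ≠ b) (hac : a ≠ c) (hbc : b ≠ c) : Fin 3 ↪ α :=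
  ⟨![a, b, c], by
    intro x y hxy
    fin_cases x <;> fin_cases y <;> simp_all⟩

lemma emb2_zero {α : Type*} (a b : α) (h : a ≠ b) : emb2 a b h 0 = a := rfl
lemma emb2_one {α : Type*} (a b : α) (h : a ≠ b) : emb2 a b h 1 = b := rfl
lemma emb3_zero {α : Type*} (a b c : α) (hab : a ≠ b) (hac : a ≠ c) (hbc : b ≠ c) :
    emb3 a b c hab hac hbc 0 = a := rfl
lemma emb3_one {α : Type*} (a b c : α) (hab : a ≠ b) (hac : a ≠ c) (hbc : b ≠ c) :
    emb3 a b c hab hac hbc 1 = b := rfl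
lemma emb3_two {α : Type*} (a b c : α) (hab : a ≠ b) (hac : a ≠ c) (hbc : b ≠ c) :
    emb3 a b c hab hac hbc 2 = c := rfl

lemma mySignNeZero {a : ℝ} (h : a = -1 ∨ a = 0 ∨ a = 1) (h0 : a ≠ 0) : a = -1 ∨ a = 1 := by
  tauto

lemma pm_ne_zero {a : ℝ} (h : a = -1 ∨ a = 1) : a ≠ 0 := by
  rcases h with rfl | rfl <;> norm_num

lemma pm2 {a b c d : ℝ} (ha : a = -1 ∨ a = 1) (hb : b = -1 ∨ b = 1)
    (hc : c = -1 ∨ c = 1) (hd : d = -1 ∨ d = 1)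
    (h : |a * d - b * c| ≤ 1) : a * d = b * c := by
  rw [abs_le] at h
  obtain ⟨h1, h2⟩ := h
  rcases ha with rfl | rfl <;> rcases hb with rfl | rfl <;> rcases hc with rfl | rfl <;>
    rcases hd with rfl | rfl <;> linarith

lemma pm3 {p q s t u v : ℝ} (hp : p = -1 ∨ p = 1) (hq : q = -1 ∨ q = 1)
    (hs : s = -1 ∨ s = 1) (ht : t = -1 ∨ t = 1) (hu : u = -1 ∨ u = 1)
    (hv : v = -1 ∨ v = 1)
    (h : |-(p * u * t) - s * q * v| ≤ 1) : p * u * t = -(s * q * v) := by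
  rw [abs_le] at h
  obtain ⟨h1, h2⟩ := h
  rcases hp with rfl | rfl <;> rcases hq with rfl | rfl <;> rcases hs with rfl | rfl <;>
    rcases ht with rfl | rfl <;> rcases hu with rfl | rfl <;> rcases hv with rfl | rfl <;>
    linarith

theorem stmt16 (S : Matrix (Fin 4) (Fin (2 ^ 4)) ℝ) (hS : IsSauer S)
    (htype : 3 ≤ Set.ncard {i : Fin 4 | ∃ j, S i j = 1}) :
    ¬ ∃ r : Fin 4 → ℝ, (∀ i, 0 ≤ r i ∧ r i < 1) ∧
        Totally1Submodular (shiftMat r S) := by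
  rintro ⟨r, hr, hsub⟩
  -- Rows containing an entry 1 are shifted by 0.
  have hzero : ∀ i : Fin 4, (∃ j, S i j = 1) → r i = 0 := by
    rintro i ⟨j, hj⟩
    have h := hsub 1 ⟨fun _ => i, fun a b _ => Subsingleton.elim a b⟩
      ⟨fun _ => j, fun a b _ => Subsingleton.elim a b⟩
    rw [Matrix.det_fin_one] at h
    change |r i + S i j| ≤ 1 at h
    simp only [Matrix.submatrix_apply, shiftMat, Matrix.of_apply, Function.Embedding.coeFn_mk,
      hj] at h
    rw [abs_le] at h
    have h0 := (hr i).1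
    linarith [h.2]
  -- Extract three distinct rows containing a 1.
  obtain ⟨T, hTsub, hT3⟩ := Set.exists_subset_card_eq htype
  obtain ⟨i1, i2, i3, h12, h13, h23, rfl⟩ := Set.ncard_eq_three.mp hT3
  have hr1 : r i1 = 0 := hzero i1 (hTsub (by simp))
  have hr2 : r i2 = 0 := hzero i2 (hTsub (by simp))
  have hr3 : r i3 = 0 := hzero i3 (hTsub (by simp))
  -- Extract the four relevant columns.
  obtain ⟨j12, hj12, -⟩ := hS.2 {i1, i2}
  obtain ⟨j13, hj13, -⟩ := hS.2 {i1, i3}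
  obtain ⟨j23, hj23, -⟩ := hS.2 {i2, i3}
  obtain ⟨jw, hjw, -⟩ := hS.2 {i1, i2, i3}
  -- Nonzero entries.
  have np : S i1 j12 ≠ 0 := (hj12 i1).mpr (by simp)
  have nq : S i2 j12 ≠ 0 := (hj12 i2).mpr (by simp)
  have ns : S i1 j13 ≠ 0 := (hj13 i1).mpr (by simp)
  have nt : S i3 j13 ≠ 0 := (hj13 i3).mpr (by simp)
  have nu : S i2 j23 ≠ 0 := (hj23 i2).mpr (by simp)
  have nv : S i3 j23 ≠ 0 := (hj23 i3).mpr (by simp)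
  have nx : S i1 jw ≠ 0 := (hjw i1).mpr (by simp)
  have ny : S i2 jw ≠ 0 := (hjw i2).mpr (by simp)
  have nz : S i3 jw ≠ 0 := (hjw i3).mpr (by simp)
  -- Zero entries.
  have z1 : S i3 j12 = 0 := by
    by_contra h0
    have := (hj12 i3).mp h0
    simp only [Set.mem_insert_iff, Set.mem_singleton_iff] at this
    rcases this with h | h
    · exact h13 h.symm
    · exact h23 h.symm
  have z2 : S i2 j13 = 0 := by
    by_contra h0
    have := (hj13 i2).mp h0
    simp only [Set.mem_insert_iff, Set.mem_singleton_iff] at this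
    rcases this with h | h
    · exact h12 h.symm
    · exact h23 h
  have z3 : S i1 j23 = 0 := by
    by_contra h0
    have := (hj23 i1).mp h0
    simp only [Set.mem_insert_iff, Set.mem_singleton_iff] at this
    rcases this with h | h
    · exact h12 h
    · exact h13 h
  -- Column distinctness.
  have c1 : j12 ≠ j13 := by rintro rfl; exact nt z1
  have c2 : j12 ≠ j23 := by rintro rfl; exact np z3
  have c3 : j13 ≠ j23 := by rintro rfl; exact ns z3
  have c4 : j12 ≠ jw := by rintro rfl; exact nz z1
  have c5 : j13 ≠ jw := by rintro rfl; exact ny z2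
  have c6 : j23 ≠ jw := by rintro rfl; exact nx z3
  -- Signs of entries.
  have hp := mySignNeZero (hS.1 i1 j12) np
  have hq := mySignNeZero (hS.1 i2 j12) nq
  have hs := mySignNeZero (hS.1 i1 j13) ns
  have ht := mySignNeZero (hS.1 i3 j13) nt
  have hu := mySignNeZero (hS.1 i2 j23) nu
  have hv := mySignNeZero (hS.1 i3 j23) nv
  have hx := mySignNeZero (hS.1 i1 jw) nx
  have hy := mySignNeZero (hS.1 i2 jw) ny
  have hz := mySignNeZero (hS.1 i3 jw) nz
  -- 2×2 minors against the full-support column.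
  have d1 := hsub 2 (emb2 i1 i2 h12) (emb2 j12 jw c4)
  have e1 : ((shiftMat r S).submatrix (emb2 i1 i2 h12) (emb2 j12 jw c4)).det
      = S i1 j12 * S i2 jw - S i1 jw * S i2 j12 := by
    rw [Matrix.det_fin_two]
    simp [emb2_zero, emb2_one, shiftMat, hr1, hr2]
  rw [e1] at d1
  have d2 := hsub 2 (emb2 i1 i3 h13) (emb2 j13 jw c5)
  have e2 : ((shiftMat r S).submatrix (emb2 i1 i3 h13) (emb2 j13 jw c5)).det
      = S i1 j13 * S i3 jw - S i1 jw * S i3 j13 := by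
    rw [Matrix.det_fin_two]
    simp [emb2_zero, emb2_one, shiftMat, hr1, hr3]
  rw [e2] at d2
  have d3 := hsub 2 (emb2 i2 i3 h23) (emb2 j23 jw c6)
  have e3 : ((shiftMat r S).submatrix (emb2 i2 i3 h23) (emb2 j23 jw c6)).det
      = S i2 j23 * S i3 jw - S i2 jw * S i3 j23 := by
    rw [Matrix.det_fin_two]
    simp [emb2_zero, emb2_one, shiftMat, hr2, hr3]
  rw [e3] at d3
  have k1 := pm2 hp hx hq hy d1
  have k2 := pm2 hs hx ht hz d2
  have k3 := pm2 hu hy hv hz d3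
  -- 3×3 minor of the three pair-support columns.
  have d4 := hsub 3 (emb3 i1 i2 i3 h12 h13 h23) (emb3 j12 j13 j23 c1 c2 c3)
  have e4 : ((shiftMat r S).submatrix (emb3 i1 i2 i3 h12 h13 h23)
      (emb3 j12 j13 j23 c1 c2 c3)).det
      = -(S i1 j12 * S i2 j23 * S i3 j13) - S i1 j13 * S i2 j12 * S i3 j23 := by
    rw [Matrix.det_fin_three]
    simp [emb3_zero, emb3_one, emb3_two, shiftMat, hr1, hr2, hr3, z1, z2, z3]
  rw [e4] at d4
  have k4 := pm3 hp hq hs ht hu hv d4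
  -- Derive the contradiction.
  set p := S i1 j12
  set q := S i2 j12
  set s := S i1 j13
  set t := S i3 j13
  set u := S i2 j23
  set v := S i3 j23
  set x := S i1 jw
  set y := S i2 jw
  set z := S i3 jw
  have sp : p * p = 1 := by rcases hp with h | h <;> rw [h] <;> norm_num
  have su : u * u = 1 := by rcases hu with h | h <;> rw [h] <;> norm_num
  have sz' : z * z = 1 := by rcases hz with h | h <;> rw [h] <;> norm_num
  have sq' : q * q = 1 := by rcases hq with h | h <;> rw [h] <;> norm_num
  have sx : x * x = 1 := by rcases hx with h | h <;> rw [h] <;> norm_num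
  have sv : v * v = 1 := by rcases hv with h | h <;> rw [h] <;> norm_num
  -- k1 : p * y = x * q, k2 : s * z = x * t, k3 : u * z = y * v, k4 : p * u * t = -(s * q * v)
  have key : S i2 jw * S i1 j13 * S i3 j13 = -(S i2 jw * S i1 j13 * S i3 j13) := by
    calc y * s * t = (p * p) * (u * u) * (z * z) * (y * s * t) := by
          rw [sp, su, sz']; ring
      _ = (p * y) * ((s * z) * ((u * z) * (p * u * t))) := by ring
      _ = (x * q) * ((x * t) * ((y * v) * (-(s * q * v)))) := by rw [k1, k2, k3, k4]
      _ = -((q * q) * (x * x) * (v * v) * (y * s * t)) := by ring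
      _ = -(y * s * t) := by rw [sq', sx, sv]; ring
  have hne : S i2 jw * S i1 j13 * S i3 j13 ≠ 0 :=
    mul_ne_zero (mul_ne_zero ny ns) nt
  have : S i2 jw * S i1 j13 * S i3 j13 = 0 := by linarith
  exact hne this
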